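/- Let X ∈ ℝ^{n×d}, A ⊆ [d] with ‖X_A⁺X_i‖₁ ≤ α for a given column index i ∉ A and some α ∈ (0,1), and suppose θ = (X_AᵀX_A)⁺η_A where η_A = (1/λ_t)X_Aᵀ(y − X_A β̃_A(λ_t)) satisfies ‖X_Aᵀ(y − X_A β̃_A(λ_t))‖_∞ ≤ λ_t. Then for either sign choice, |±1 − X_iᵀX_Aθ| ≥ 1 − α. -/

import Mathlib

open Matrix

/-- `P` is the Moore–Penrose pseudoinverse of `M`. -/
def IsMoorePenrose {m k : Type*} [Fintype m] [Fintype k]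
    (M : Matrix m k ℝ) (P : Matrix k m ℝ) : Prop :=
  M * P * M = M ∧ P * M * P = P ∧ (M * P)ᵀ = M * P ∧ (P * M)ᵀ = P * M

/-- Uniqueness of the Moore–Penrose pseudoinverse. -/
lemma mp_unique {m k : Type*} [Fintype m] [Fintype k]
    (M : Matrix m k ℝ) (P1 P2 : Matrix k m ℝ)
    (h1 : IsMoorePenrose M P1) (h2 : IsMoorePenrose M P2) : P1 = P2 := by
  obtain ⟨a1, b1, c1, d1⟩ := h1
  obtain ⟨a2, b2, c2, d2⟩ := h2
  have hMP : M * P1 = M * P2 := by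
    calc M * P1 = (M * P2 * M) * P1 := by rw [a2]
    _ = (M * P2) * (M * P1) := by simp only [Matrix.mul_assoc]
    _ = (M * P2)ᵀ * (M * P1)ᵀ := by rw [c1, c2]
    _ = P2ᵀ * ((M * P1 * M)ᵀ) := by
        simp [Matrix.transpose_mul, Matrix.mul_assoc]
    _ = P2ᵀ * Mᵀ := by rw [a1]
    _ = (M * P2)ᵀ := by rw [Matrix.transpose_mul]
    _ = M * P2 := c2
  have hPM : P1 * M = P2 * M := by
    calc P1 * M = P1 * (M * P2 * M) := by rw [a2]
    _ = (P1 * M) * (P2 * M) := by simp only [Matrix.mul_assoc]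
    _ = (P1 * M)ᵀ * (P2 * M)ᵀ := by rw [d1, d2]
    _ = ((M * P1 * M)ᵀ) * P2ᵀ := by
        simp [Matrix.transpose_mul, Matrix.mul_assoc]
    _ = Mᵀ * P2ᵀ := by rw [a1]
    _ = (P2 * M)ᵀ := by rw [Matrix.transpose_mul]
    _ = P2 * M := d2
  calc P1 = P1 * M * P1 := b1.symm
  _ = P1 * (M * P2) := by rw [← hMP, Matrix.mul_assoc]
  _ = (P1 * M) * P2 := by rw [Matrix.mul_assoc]
  _ = P2 * M * P2 := by rw [hPM]
  _ = P2 := b2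

/-- If `‖X_A⁺X_i‖₁ ≤ α` for a column `i ∉ A` with `α ∈ (0,1)`, and
`θ = (X_AᵀX_A)⁺ η_A` where `η_A = (1/λ_t)X_Aᵀ(y − X_A β̃_A)` satisfies
`‖X_Aᵀ(y − X_A β̃_A)‖_∞ ≤ λ_t`, then `|±1 − X_iᵀX_Aθ| ≥ 1 − α` for either sign. -/
theorem joining_denominator_lower_bound {n d : ℕ} (X : Matrix (Fin n) (Fin d) ℝ)
    (A : Finset (Fin d)) (i : Fin d) (hi : i ∉ A)
    (XA : Matrix (Fin n) {j // j ∈ A} ℝ) (hXA : ∀ r a, XA r a = X r a.1)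
    (P : Matrix {j // j ∈ A} (Fin n) ℝ) (hP : IsMoorePenrose XA P)
    (Q : Matrix {j // j ∈ A} {j // j ∈ A} ℝ) (hQ : IsMoorePenrose (XAᵀ * XA) Q)
    (α : ℝ) (hα : α ∈ Set.Ioo (0 : ℝ) 1)
    (hinc : ∑ a : {j // j ∈ A}, |P.mulVec (fun r => X r i) a| ≤ α)
    (y : Fin n → ℝ) (βtA : {j // j ∈ A} → ℝ) (lamt : ℝ) (hlamt : 0 < lamt)
    (ηA : {j // j ∈ A} → ℝ)
    (hηA : ηA = fun a => lamt⁻¹ * ∑ r, XA r a * (y r - XA.mulVec βtA r))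
    (hbound : ∀ a, |∑ r, XA r a * (y r - XA.mulVec βtA r)| ≤ lamt)
    (θ : {j // j ∈ A} → ℝ) (hθ : θ = Q.mulVec ηA) :
    1 - α ≤ |1 - ∑ r, X r i * XA.mulVec θ r| ∧
    1 - α ≤ |(-1) - ∑ r, X r i * XA.mulVec θ r| := by
  obtain ⟨a1, b1, c1, d1⟩ := hP
  -- P * Pᵀ is a Moore–Penrose pseudoinverse of XAᵀ * XA
  have hPPt : IsMoorePenrose (XAᵀ * XA) (P * Pᵀ) := by
    have key : XA * (P * Pᵀ) * XAᵀ = XA * P := by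
      calc XA * (P * Pᵀ) * XAᵀ = (XA * P) * (XA * P)ᵀ := by
            simp [Matrix.transpose_mul, Matrix.mul_assoc]
      _ = (XA * P) * (XA * P) := by rw [c1]
      _ = (XA * P * XA) * P := by simp [Matrix.mul_assoc]
      _ = XA * P := by rw [a1]
    have key2 : (P * Pᵀ) * (XAᵀ * XA) = P * XA := by
      calc (P * Pᵀ) * (XAᵀ * XA) = P * ((XA * P)ᵀ * XA) := by
            simp [Matrix.transpose_mul, Matrix.mul_assoc]
      _ = P * ((XA * P) * XA) := by rw [c1]
      _ = (P * (XA * P)) * XA := by simp [Matrix.mul_assoc]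
      _ = P * XA := by rw [← Matrix.mul_assoc, b1]
    have key3 : (XAᵀ * XA) * (P * Pᵀ) = P * XA := by
      have : (XAᵀ * XA) * (P * Pᵀ) = ((P * Pᵀ) * (XAᵀ * XA))ᵀ := by
        simp [Matrix.transpose_mul, Matrix.mul_assoc]
      rw [this, key2, d1]
    refine ⟨?_, ?_, ?_, ?_⟩
    · calc (XAᵀ * XA) * (P * Pᵀ) * (XAᵀ * XA)
          = XAᵀ * (XA * (P * Pᵀ) * XAᵀ) * XA := by simp [Matrix.mul_assoc]
      _ = XAᵀ * (XA * P) * XA := by rw [key]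
      _ = XAᵀ * (XA * P * XA) := by simp [Matrix.mul_assoc]
      _ = XAᵀ * XA := by rw [a1]
    · calc (P * Pᵀ) * (XAᵀ * XA) * (P * Pᵀ)
          = (P * XA) * (P * Pᵀ) := by rw [key2]
      _ = (P * XA * P) * Pᵀ := by simp [Matrix.mul_assoc]
      _ = P * Pᵀ := by rw [b1]
    · rw [key3]; exact d1
    · rw [key2]; exact d1
  have hQeq : Q = P * Pᵀ := mp_unique _ _ _ hQ hPPt
  -- Q * XAᵀ = P
  have hQXt : Q * XAᵀ = P := by
    calc Q * XAᵀ = P * (XA * P)ᵀ := by rw [hQeq]; simp [Matrix.transpose_mul, Matrix.mul_assoc]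
    _ = P * (XA * P) := by rw [c1]
    _ = P := by rw [← Matrix.mul_assoc, b1]
  set v : Fin n → ℝ := fun r => y r - XA.mulVec βtA r with hv
  set Xi : Fin n → ℝ := fun r => X r i with hXi
  set p : {j // j ∈ A} → ℝ := P.mulVec Xi with hp
  have hw : ∀ a, XAᵀ.mulVec v a = ∑ r, XA r a * v r := by
    intro a
    simp [Matrix.mulVec, dotProduct, Matrix.transpose_apply]
  -- θ = lamt⁻¹ • (P *ᵥ v)
  have hθ' : θ = lamt⁻¹ • P.mulVec v := by
    rw [hθ, hηA]
    have : (fun a => lamt⁻¹ * ∑ r, XA r a * (y r - XA.mulVec βtA r))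
        = lamt⁻¹ • (XAᵀ.mulVec v) := by
      funext a
      rw [Pi.smul_apply, hw a, smul_eq_mul]
    rw [this, Matrix.mulVec_smul]
    congr 1
    rw [Matrix.mulVec_mulVec, hQXt]
  -- the scalar S
  have hS : ∑ r, X r i * XA.mulVec θ r
      = lamt⁻¹ * (p ⬝ᵥ XAᵀ.mulVec v) := by
    have e1 : ∑ r, X r i * XA.mulVec θ r = Xi ⬝ᵥ XA.mulVec θ := by
      simp [dotProduct, hXi]
    rw [e1, hθ', Matrix.mulVec_smul, dotProduct_smul]
    congr 1
    calc Xi ⬝ᵥ XA.mulVec (P.mulVec v)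
        = Xi ⬝ᵥ (XA * P).mulVec v := by rw [Matrix.mulVec_mulVec]
      _ = ((XA * P)ᵀ.mulVec Xi) ⬝ᵥ v := by
          rw [Matrix.dotProduct_mulVec, Matrix.mulVec_transpose]
      _ = ((XA * P).mulVec Xi) ⬝ᵥ v := by rw [c1]
      _ = (XA.mulVec (P.mulVec Xi)) ⬝ᵥ v := by rw [Matrix.mulVec_mulVec]
      _ = p ⬝ᵥ XAᵀ.mulVec v := by
          rw [hp, dotProduct_comm, Matrix.dotProduct_mulVec,
            ← Matrix.mulVec_transpose]
          exact dotProduct_comm _ _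
  -- bound |S| ≤ α
  have hSle : |∑ r, X r i * XA.mulVec θ r| ≤ α := by
    rw [hS, abs_mul, abs_inv, abs_of_pos hlamt]
    have hb : |p ⬝ᵥ XAᵀ.mulVec v| ≤ lamt * α := by
      calc |p ⬝ᵥ XAᵀ.mulVec v| ≤ ∑ a, |p a * XAᵀ.mulVec v a| := by
            exact Finset.abs_sum_le_sum_abs _ _
      _ ≤ ∑ a, |p a| * lamt := by
          apply Finset.sum_le_sum
          intro a _
          rw [abs_mul]
          have := hbound a
          rw [← hw a] at this
          · exact mul_le_mul_of_nonneg_left (by simpa [hv] using this) (abs_nonneg _)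
      _ = (∑ a, |p a|) * lamt := by rw [← Finset.sum_mul]
      _ ≤ α * lamt := by
          apply mul_le_mul_of_nonneg_right _ hlamt.le
          simpa [hp, hXi] using hinc
      _ = lamt * α := mul_comm _ _
    calc lamt⁻¹ * |p ⬝ᵥ XAᵀ.mulVec v| ≤ lamt⁻¹ * (lamt * α) := by
          exact mul_le_mul_of_nonneg_left hb (inv_nonneg.mpr hlamt.le)
    _ = α := by field_simp
  constructor
  · have h := abs_sub_abs_le_abs_sub (1:ℝ) (∑ r, X r i * XA.mulVec θ r)
    rw [abs_one] at h
    linarith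
  · have h := abs_sub_abs_le_abs_sub (-1:ℝ) (∑ r, X r i * XA.mulVec θ r)
    rw [abs_neg, abs_one] at h
    linarith
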